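/- Let 0<x<1 be real, and let r, s be complex numbers with 0<Re(r)<1 and Re(s)>1; set r* := r−1. Then for every complex z with |z|<x the fusion relation f₁₁(xz)·f₁₁(x^{−1}z) = Δ(z)·f₁₂(z) holds, where Δ(z) := (1−x^{r+r*}z)(1−x^{−r−r*}z)/((1−xz)(1−x^{−1}z)). -/

import Mathlib

open Complex

/-- `x^w := exp(w · log x)` for real `x` and complex `w`. -/
noncomputable def xpow (x : ℝ) (w : ℂ) : ℂ := Complex.exp (w * (Real.log x : ℂ))

/-- The infinite `q`-Pochhammer product `(z;q)_∞ = ∏_{j=0}^∞ (1 − q^j z)`. -/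
noncomputable def qPoch (z q : ℂ) : ℂ := ∏' j : ℕ, (1 - q ^ j * z)

/-- `Θ_q(z) = (z;q)_∞ (q z⁻¹;q)_∞ (q;q)_∞`. -/
noncomputable def jacTheta0 (q z : ℂ) : ℂ := qPoch z q * qPoch (q * z⁻¹) q * qPoch q q

/-- The Jacobi theta function `[u]_r = x^{u²/r − u} Θ_{x^{2r}}(x^{2u}) / ((x^{2r};x^{2r})_∞)³`. -/
noncomputable def jTheta (x : ℝ) (r u : ℂ) : ℂ :=
  xpow x (u ^ 2 / r - u) * jacTheta0 (xpow x (2 * r)) (xpow x (2 * u)) /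
    (qPoch (xpow x (2 * r)) (xpow x (2 * r))) ^ 3

/-- The `m`-th term of the defining series of `f₁₁(z)` (with `r* = r − 1`). -/
noncomputable def f11term (x : ℝ) (r s z : ℂ) (m : ℕ) : ℂ :=
  (1 / (m : ℂ)) * (1 - xpow x (2 * r * m)) * (1 - xpow x (-2 * (r - 1) * m)) *
    (1 - xpow x (2 * (s - 1) * m)) / (1 - xpow x (2 * s * m)) * z ^ m

/-- `f₁₁(z) = exp(∑_{m≥1} …)`, the structure function of the deformed Virasoro algebra. -/
noncomputable def f11 (x : ℝ) (r s z : ℂ) : ℂ :=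
  Complex.exp (∑' m : ℕ, f11term x r s z (m + 1))

/-- The `m`-th term of the defining series of `f₁₂(z)` (with `r* = r − 1`). -/
noncomputable def f12term (x : ℝ) (r s z : ℂ) (m : ℕ) : ℂ :=
  (1 / (m : ℂ)) * (1 - xpow x (2 * r * m)) * (1 - xpow x (-2 * (r - 1) * m)) *
    (1 - xpow x (2 * (s - 2) * m)) / (1 - xpow x (2 * s * m)) * ((x : ℂ) * z) ^ m

/-- `f₁₂(z) = exp(∑_{m≥1} …)`. -/
noncomputable def f12 (x : ℝ) (r s z : ℂ) : ℂ :=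
  Complex.exp (∑' m : ℕ, f12term x r s z (m + 1))

/-! ### Auxiliary lemmas -/

lemma xpow_add (x : ℝ) (a b : ℂ) : xpow x (a + b) = xpow x a * xpow x b := by
  simp [xpow, add_mul, Complex.exp_add]

lemma xpow_ne_zero (x : ℝ) (w : ℂ) : xpow x w ≠ 0 := Complex.exp_ne_zero _

lemma xpow_zero (x : ℝ) : xpow x 0 = 1 := by simp [xpow]

lemma xpow_neg (x : ℝ) (w : ℂ) : xpow x (-w) = (xpow x w)⁻¹ := by
  simp [xpow, neg_mul, Complex.exp_neg]

lemma xpow_natmul (x : ℝ) (w : ℂ) (n : ℕ) : xpow x (w * n) = xpow x w ^ n := by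
  rw [xpow, xpow, ← Complex.exp_nat_mul]; ring_nf

lemma norm_xpow {x : ℝ} (hx : 0 < x) (w : ℂ) : ‖xpow x w‖ = x ^ w.re := by
  rw [xpow, Complex.norm_exp, Real.rpow_def_of_pos hx]
  congr 1
  simp [Complex.mul_re]
  ring

lemma xpow_one {x : ℝ} (hx : 0 < x) : xpow x 1 = x := by
  rw [xpow, one_mul, ← Complex.ofReal_exp, Real.exp_log hx]

lemma re_mul_nat (w : ℂ) (n : ℕ) : (w * (n : ℂ)).re = w.re * n := by
  simp [Complex.mul_re]

lemma one_sub_ne {w : ℂ} (h : ‖w‖ < 1) : 1 - w ≠ 0 := by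
  rw [sub_ne_zero]
  intro h1
  rw [← h1, norm_one] at h
  exact lt_irrefl 1 h

lemma hasSum_shift {w : ℂ} (hw : ‖w‖ < 1) :
    HasSum (fun m : ℕ => w ^ (m + 1) / ((m + 1 : ℕ) : ℂ)) (-Complex.log (1 - w)) := by
  refine (hasSum_nat_add_iff (f := fun n : ℕ => w ^ n / (n : ℂ)) 1).mpr ?_
  simpa using Complex.hasSum_taylorSeries_neg_log hw

lemma alg (A A' G U V Z N : ℂ) (hN : N ≠ 0) (hC : 1 - G*U^4 ≠ 0)
    (hUV : U * V = 1) (hAA : A * A' = 1) :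
    1/N * (1-A) * (1-A'*U*U) * (1-G*U*U) / (1-G*U^4) * (U*Z)
      + 1/N * (1-A) * (1-A'*U*U) * (1-G*U*U) / (1-G*U^4) * (V*Z)
    = 1/N * (1-A) * (1-A'*U*U) * (1-G) / (1-G*U^4) * (U*Z)
      + (U*Z + V*Z - A*V*Z - A'*U*U*V*Z)/N := by
  field_simp
  have hC' : 1 - U^4*G ≠ 0 := by rwa [mul_comm] at hC
  rw [div_eq_iff hC', mul_add Z, add_mul, mul_div_assoc', div_mul_cancel₀ _ hC']
  linear_combination (-Z*((1-A)*(1-A'*U^2)*U*G*(1-U^2) - U*(1-U^4*G))) * hUV + Z*U^2*V*(1-U^4*G) * hAA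

lemma key (x : ℝ) (hx0 : 0 < x) (hx1 : x < 1) (r s z : ℂ) (hs : 1 < s.re) (m : ℕ) :
    f11term x r s ((x:ℂ)*z) (m+1) + f11term x r s (((x:ℂ))⁻¹*z) (m+1)
      = f12term x r s z (m+1)
        + (((x:ℂ)*z)^(m+1) + (((x:ℂ))⁻¹*z)^(m+1)
            - (xpow x (2*r-1)*z)^(m+1) - (xpow x (-(2*r-1))*z)^(m+1)) / ((m+1:ℕ):ℂ) := by
  have hC : 1 - xpow x (2*s*((m+1:ℕ):ℂ)) ≠ 0 := by
    apply one_sub_ne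
    rw [norm_xpow hx0]
    apply Real.rpow_lt_one hx0.le hx1
    rw [re_mul_nat]
    have h2 : (2*s).re = 2*s.re := by simp
    rw [h2]
    have h3 : (0:ℝ) < ((m+1:ℕ):ℝ) := by positivity
    nlinarith
  have hN : ((m+1:ℕ):ℂ) ≠ 0 := Nat.cast_ne_zero.mpr (Nat.succ_ne_zero m)
  unfold f11term f12term
  have hxc : (x:ℂ) = xpow x 1 := (xpow_one hx0).symm
  have hxci : (x:ℂ)⁻¹ = xpow x (-1) := by rw [xpow_neg, hxc]
  rw [hxci, hxc]
  simp only [mul_pow, ← xpow_natmul, one_mul, neg_mul]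
  set N : ℂ := ((m+1:ℕ):ℂ) with hNdef
  have e1 : xpow x (-(2*(r-1)*N)) = xpow x (-(2*r)*N) * xpow x N * xpow x N := by
    rw [← xpow_add, ← xpow_add]; congr 1; ring
  have e2 : xpow x (2*(s-1)*N) = xpow x (2*(s-2)*N) * xpow x N * xpow x N := by
    rw [← xpow_add, ← xpow_add]; congr 1; ring
  have e3 : xpow x (2*s*N) = xpow x (2*(s-2)*N) * xpow x N ^ 4 := by
    rw [← xpow_natmul, ← xpow_add]; congr 1; push_cast; ring
  have e4 : xpow x ((2*r-1)*N) = xpow x (2*r*N) * xpow x (-N) := by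
    rw [← xpow_add]; congr 1; ring
  have e5 : xpow x (-((2*r-1)*N)) = xpow x (-(2*r)*N) * xpow x N * xpow x N * xpow x (-N) := by
    rw [← xpow_add, ← xpow_add, ← xpow_add]; congr 1; ring
  have hUV : xpow x N * xpow x (-N) = 1 := by
    rw [← xpow_add, add_neg_cancel, xpow_zero]
  have hAA : xpow x (2*r*N) * xpow x (-(2*r)*N) = 1 := by
    rw [← xpow_add, show 2*r*N + -(2*r)*N = 0 by ring, xpow_zero]
  rw [e3] at hC
  rw [e1, e2, e3, e4, e5]
  exact alg (xpow x (2*r*N)) (xpow x (-(2*r)*N)) (xpow x (2*(s-2)*N)) (xpow x N)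
    (xpow x (-N)) (z^(m+1)) N hN hC hUV hAA

lemma summable_gen (x : ℝ) (hx0 : 0 < x) (hx1 : x < 1) (r s t : ℂ)
    (hr0 : 0 ≤ r.re) (hr1 : r.re ≤ 1) (hs : 0 < s.re) (w : ℂ) (hw : ‖w‖ < 1)
    (hw2 : x ^ (2*t.re) * ‖w‖ < 1) :
    Summable (fun m : ℕ => (1 / ((m+1:ℕ) : ℂ)) * (1 - xpow x (2 * r * ((m+1:ℕ):ℂ))) *
      (1 - xpow x (-2 * (r - 1) * ((m+1:ℕ):ℂ))) * (1 - xpow x (2 * t * ((m+1:ℕ):ℂ))) /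
      (1 - xpow x (2 * s * ((m+1:ℕ):ℂ))) * w ^ (m+1)) := by
  set δ := x ^ (2*s.re) with hδdef
  have hδ1 : δ < 1 := Real.rpow_lt_one hx0.le hx1 (by linarith)
  have hδpos : 0 < 1 - δ := by linarith
  set q := x ^ (2*t.re) with hqdef
  have hqpos : 0 < q := Real.rpow_pos_of_pos hx0 _
  apply Summable.of_norm_bounded
    (g := fun m => (4/(1-δ)) * (‖w‖^(m+1) + (q * ‖w‖)^(m+1)))
  · apply Summable.mul_left
    apply Summable.add
    · exact (summable_nat_add_iff 1).mpr (summable_geometric_of_lt_one (norm_nonneg w) hw)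
    · exact (summable_nat_add_iff 1).mpr
        (summable_geometric_of_lt_one (by positivity) hw2)
  · intro m
    have hm1 : (1:ℝ) ≤ ((m+1:ℕ):ℝ) := by
      exact_mod_cast Nat.one_le_iff_ne_zero.mpr (Nat.succ_ne_zero m)
    have ha : ‖1 - xpow x (2 * r * ((m+1:ℕ):ℂ))‖ ≤ 2 := by
      refine (norm_sub_le _ _).trans ?_
      rw [norm_one, norm_xpow hx0, re_mul_nat]
      have h5 : x ^ ((2*r).re * ((m+1:ℕ):ℝ)) ≤ 1 := by
        apply Real.rpow_le_one hx0.le hx1.le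
        have h4 : (2*r).re = 2*r.re := by simp
        rw [h4]; positivity
      linarith
    have hb : ‖1 - xpow x (-2 * (r - 1) * ((m+1:ℕ):ℂ))‖ ≤ 2 := by
      refine (norm_sub_le _ _).trans ?_
      rw [norm_one, norm_xpow hx0, re_mul_nat]
      have h5 : x ^ ((-2*(r-1)).re * ((m+1:ℕ):ℝ)) ≤ 1 := by
        apply Real.rpow_le_one hx0.le hx1.le
        have h4 : (-2*(r-1)).re = 2*(1-r.re) := by simp; ring
        rw [h4]; exact mul_nonneg (by linarith) (by linarith)
      linarith
    have hc : ‖1 - xpow x (2 * t * ((m+1:ℕ):ℂ))‖ ≤ 1 + q^(m+1) := by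
      refine (norm_sub_le _ _).trans ?_
      rw [norm_one, norm_xpow hx0, re_mul_nat]
      have h4 : (2*t).re = 2*t.re := by simp
      have h5 : x ^ ((2*t).re * ((m+1:ℕ):ℝ)) = q^(m+1) := by
        rw [h4, Real.rpow_mul hx0.le, Real.rpow_natCast]
      rw [h5]
    have hd : 1 - δ ≤ ‖1 - xpow x (2 * s * ((m+1:ℕ):ℂ))‖ := by
      have hle : x ^ ((2*s).re * ((m+1:ℕ):ℝ)) ≤ δ := by
        rw [show (2*s).re = 2*s.re by simp, hδdef]
        apply Real.rpow_le_rpow_of_exponent_ge hx0 hx1.le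
        nlinarith
      calc 1 - δ ≤ 1 - ‖xpow x (2 * s * ((m+1:ℕ):ℂ))‖ := by
            rw [norm_xpow hx0, re_mul_nat]; linarith
        _ ≤ ‖1 - xpow x (2 * s * ((m+1:ℕ):ℂ))‖ := by
            simpa using norm_sub_norm_le (1:ℂ) (xpow x (2 * s * ((m+1:ℕ):ℂ)))
    have h1 : ‖(1:ℂ) / ((m+1:ℕ):ℂ)‖ ≤ 1 := by
      rw [norm_div, norm_one, Complex.norm_natCast]
      exact div_le_one_of_le₀ hm1 (by linarith)
    calc ‖(1 / ((m+1:ℕ) : ℂ)) * (1 - xpow x (2 * r * ((m+1:ℕ):ℂ))) *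
          (1 - xpow x (-2 * (r - 1) * ((m+1:ℕ):ℂ))) * (1 - xpow x (2 * t * ((m+1:ℕ):ℂ))) /
          (1 - xpow x (2 * s * ((m+1:ℕ):ℂ))) * w ^ (m+1)‖
        = ‖(1:ℂ) / ((m+1:ℕ):ℂ)‖ * ‖1 - xpow x (2 * r * ((m+1:ℕ):ℂ))‖ *
            ‖1 - xpow x (-2 * (r - 1) * ((m+1:ℕ):ℂ))‖ * ‖1 - xpow x (2 * t * ((m+1:ℕ):ℂ))‖ /
            ‖1 - xpow x (2 * s * ((m+1:ℕ):ℂ))‖ * ‖w‖^(m+1) := by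
          rw [norm_mul, norm_div, norm_mul, norm_mul, norm_mul, norm_pow]
      _ ≤ 1 * 2 * 2 * (1 + q^(m+1)) / (1-δ) * ‖w‖^(m+1) := by
          gcongr
      _ = 4/(1-δ) * (‖w‖^(m+1) + (q * ‖w‖)^(m+1)) := by
          rw [mul_pow]; ring

theorem stmt6 (x : ℝ) (hx0 : 0 < x) (hx1 : x < 1) (r s : ℂ)
    (hr0 : 0 < r.re) (hr1 : r.re < 1) (hs : 1 < s.re) (z : ℂ) (hz : ‖z‖ < x) :
    f11 x r s ((x : ℂ) * z) * f11 x r s (((x : ℂ))⁻¹ * z) =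
      ((1 - xpow x (2 * r - 1) * z) * (1 - xpow x (-(2 * r - 1)) * z) /
        ((1 - (x : ℂ) * z) * (1 - ((x : ℂ))⁻¹ * z))) * f12 x r s z := by
  have hz0 : 0 ≤ ‖z‖ := norm_nonneg z
  have hzx1 : ‖z‖ < 1 := hz.trans hx1
  have hxC : ‖(x:ℂ)‖ = x := by rw [Complex.norm_real]; exact abs_of_pos hx0
  have n1 : ‖(x:ℂ)*z‖ < 1 := by rw [norm_mul, hxC]; nlinarith
  have n2 : ‖((x:ℂ))⁻¹*z‖ < 1 := by
    rw [norm_mul, norm_inv, hxC]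
    have h := mul_lt_mul_of_pos_left hz (inv_pos.mpr hx0)
    rwa [inv_mul_cancel₀ hx0.ne'] at h
  have hre1 : (2*r-1).re = 2*r.re-1 := by simp
  have hre2 : (-(2*r-1)).re = 1-2*r.re := by simp
  have n3 : ‖xpow x (2*r-1)*z‖ < 1 := by
    rw [norm_mul, norm_xpow hx0, hre1]
    calc x^(2*r.re-1)*‖z‖ < x^(2*r.re-1)*x :=
          mul_lt_mul_of_pos_left hz (Real.rpow_pos_of_pos hx0 _)
      _ = x^(2*r.re-1+1) := (Real.rpow_add_one hx0.ne' _).symm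
      _ < 1 := Real.rpow_lt_one hx0.le hx1 (by linarith)
  have n4 : ‖xpow x (-(2*r-1))*z‖ < 1 := by
    rw [norm_mul, norm_xpow hx0, hre2]
    calc x^(1-2*r.re)*‖z‖ < x^(1-2*r.re)*x :=
          mul_lt_mul_of_pos_left hz (Real.rpow_pos_of_pos hx0 _)
      _ = x^(1-2*r.re+1) := (Real.rpow_add_one hx0.ne' _).symm
      _ < 1 := Real.rpow_lt_one hx0.le hx1 (by linarith)
  have d1 := one_sub_ne n1
  have d2 := one_sub_ne n2
  have d3 := one_sub_ne n3
  have d4 := one_sub_ne n4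
  -- summability
  have hq11 : ∀ w : ℂ, ‖w‖ < 1 → Summable (fun m => f11term x r s w (m+1)) := by
    intro w hw
    unfold f11term
    apply summable_gen x hx0 hx1 r s (s-1) hr0.le hr1.le (by linarith) w hw
    have h4 : ((s:ℂ)-1).re = s.re - 1 := by simp
    rw [h4]
    calc x ^ (2*(s.re-1)) * ‖w‖ ≤ 1 * ‖w‖ := by
          gcongr
          exact Real.rpow_le_one hx0.le hx1.le (by linarith)
      _ < 1 := by rwa [one_mul]
  have S1 : Summable (fun m => f11term x r s ((x:ℂ)*z) (m+1)) := hq11 _ n1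
  have S2 : Summable (fun m => f11term x r s (((x:ℂ))⁻¹*z) (m+1)) := hq11 _ n2
  have S3 : Summable (fun m => f12term x r s z (m+1)) := by
    unfold f12term
    apply summable_gen x hx0 hx1 r s (s-2) hr0.le hr1.le (by linarith) ((x:ℂ)*z) n1
    have h4 : ((s:ℂ)-2).re = s.re - 2 := by simp
    rw [h4, norm_mul, hxC]
    calc x ^ (2*(s.re-2)) * (x * ‖z‖) < x ^ (2*(s.re-2)) * (x*x) := by
          apply mul_lt_mul_of_pos_left (by nlinarith) (Real.rpow_pos_of_pos hx0 _)
      _ = x ^ (2*(s.re-2)+1+1) := by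
          rw [Real.rpow_add_one hx0.ne', Real.rpow_add_one hx0.ne']; ring
      _ < 1 := Real.rpow_lt_one hx0.le hx1 (by linarith)
  -- the logarithmic series
  have H1 := hasSum_shift n1
  have H2 := hasSum_shift n2
  have H3 := hasSum_shift n3
  have H4 := hasSum_shift n4
  have Hg : HasSum (fun m : ℕ => (((x:ℂ)*z)^(m+1) + (((x:ℂ))⁻¹*z)^(m+1)
        - (xpow x (2*r-1)*z)^(m+1) - (xpow x (-(2*r-1))*z)^(m+1)) / ((m+1:ℕ):ℂ))
      (-Complex.log (1-(x:ℂ)*z) + -Complex.log (1-((x:ℂ))⁻¹*z)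
        - -Complex.log (1-xpow x (2*r-1)*z) - -Complex.log (1-xpow x (-(2*r-1))*z)) := by
    have h := ((H1.add H2).sub H3).sub H4
    have hfun : (fun m : ℕ => (((x:ℂ)*z)^(m+1) + (((x:ℂ))⁻¹*z)^(m+1)
        - (xpow x (2*r-1)*z)^(m+1) - (xpow x (-(2*r-1))*z)^(m+1)) / ((m+1:ℕ):ℂ))
        = (fun m : ℕ => ((x:ℂ)*z)^(m+1)/((m+1:ℕ):ℂ) + (((x:ℂ))⁻¹*z)^(m+1)/((m+1:ℕ):ℂ)
            - (xpow x (2*r-1)*z)^(m+1)/((m+1:ℕ):ℂ)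
            - (xpow x (-(2*r-1))*z)^(m+1)/((m+1:ℕ):ℂ)) := by
      funext m; ring
    rw [hfun]
    exact h
  -- main computation
  unfold f11 f12
  rw [← Complex.exp_add]
  have hsum : (∑' m : ℕ, f11term x r s ((x:ℂ)*z) (m+1))
        + (∑' m : ℕ, f11term x r s (((x:ℂ))⁻¹*z) (m+1))
      = (∑' m : ℕ, f12term x r s z (m+1))
        + (-Complex.log (1-(x:ℂ)*z) + -Complex.log (1-((x:ℂ))⁻¹*z)
            - -Complex.log (1-xpow x (2*r-1)*z) - -Complex.log (1-xpow x (-(2*r-1))*z)) := by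
    rw [← S1.tsum_add S2, tsum_congr (fun m => key x hx0 hx1 r s z hs m),
      S3.tsum_add Hg.summable, Hg.tsum_eq]
  rw [hsum, Complex.exp_add, mul_comm]
  congr 1
  rw [Complex.exp_sub, Complex.exp_sub, Complex.exp_add, Complex.exp_neg, Complex.exp_neg,
    Complex.exp_neg, Complex.exp_neg, Complex.exp_log d1, Complex.exp_log d2,
    Complex.exp_log d3, Complex.exp_log d4]
  field_simp
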